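/- For all natural numbers u and t with u < t, ∑_{k=u+1}^{t−1} 1/(log(k+3)·log(k−u+3)·√(k+1)·√(k−u+1)) ≤ 2/log 3. -/

import Mathlib

open Finset Real

lemma amgm (a b : ℝ) (ha : 0 < a) (hb : 0 < b) :
    1 / (a * b) ≤ (1 / a ^ 2 + 1 / b ^ 2) / 2 := by
  rw [div_add_div _ _ (by positivity) (by positivity), div_div,
    div_le_div_iff₀ (by positivity) (by positivity)]
  nlinarith [sq_nonneg (a - b), mul_pos ha hb, sq_nonneg (a*b), sq_nonneg (a - b)]

lemma keyB (x : ℝ) (hx : 2 ≤ x) :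
    1 / (x * Real.log (x + 2) ^ 2) ≤ 2 / Real.log (x + 1) - 2 / Real.log (x + 2) := by
  have hl1 : 0 < Real.log (x + 1) := Real.log_pos (by linarith)
  have hl2 : 0 < Real.log (x + 2) := Real.log_pos (by linarith)
  have hmono : Real.log (x + 1) ≤ Real.log (x + 2) := Real.log_le_log (by linarith) (by linarith)
  have h0 : (0:ℝ) < (x + 1) / (x + 2) := by positivity
  have h1 := Real.log_le_sub_one_of_pos h0
  rw [Real.log_div (by linarith) (by linarith)] at h1
  have hkey : (x + 2) * ((x + 1) / (x + 2) - 1) = -1 := by field_simp; norm_num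
  have hdiff : 1 ≤ (x + 2) * (Real.log (x + 2) - Real.log (x + 1)) := by
    nlinarith [mul_le_mul_of_nonneg_left h1 (show (0:ℝ) ≤ x + 2 by linarith)]
  rw [div_sub_div _ _ hl1.ne' hl2.ne', div_le_div_iff₀ (by positivity) (by positivity)]
  nlinarith [mul_le_mul_of_nonneg_right hdiff (sq_nonneg (Real.log (x + 2))),
    mul_nonneg (mul_nonneg (sub_nonneg.2 hmono) hl2.le) hl2.le,
    mul_le_mul_of_nonneg_right hmono hl2.le]

lemma telesum (m n : ℕ) (f : ℕ → ℝ) (h0 : 0 ≤ f m) (hn : 0 ≤ f n) :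
    ∑ k ∈ Finset.Ico m n, (f k - f (k + 1)) ≤ f m := by
  rcases le_or_gt m n with h | h
  · rw [Finset.sum_Ico_eq_sum_range]
    have key : ∑ i ∈ Finset.range (n - m), (f (m + i) - f (m + i + 1))
        = f m - f (m + (n - m)) := by
      have := Finset.sum_range_sub' (fun i => f (m + i)) (n - m)
      simpa [add_assoc] using this
    rw [key, Nat.add_sub_cancel' h]
    linarith
  · rw [Finset.Ico_eq_empty (by omega), Finset.sum_empty]
    exact h0

theorem stmt_5 (u t : ℕ) (hut : u < t) :
    ∑ k ∈ Finset.Ico (u + 1) t,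
      1 / (Real.log (k + 3) * Real.log ((k : ℝ) - u + 3) *
        Real.sqrt (k + 1) * Real.sqrt ((k : ℝ) - u + 1)) ≤
    2 / Real.log 3 := by
  have hL3 : 0 < Real.log 3 := Real.log_pos (by norm_num)
  set f₁ : ℕ → ℝ := fun j => 2 / Real.log ((j:ℝ) + 2) with hf₁
  set f₂ : ℕ → ℝ := fun j => 2 / Real.log ((j:ℝ) - u + 2) with hf₂
  have hstep : ∀ k ∈ Finset.Ico (u+1) t,
      1 / (Real.log (k + 3) * Real.log ((k : ℝ) - u + 3) *
        Real.sqrt (k + 1) * Real.sqrt ((k : ℝ) - u + 1))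
      ≤ ((f₁ k - f₁ (k+1)) + (f₂ k - f₂ (k+1))) / 2 := by
    intro k hk
    obtain ⟨hk1, hk2⟩ := Finset.mem_Ico.mp hk
    have hku : (u:ℝ) + 1 ≤ (k:ℝ) := by exact_mod_cast hk1
    have hu0 : (0:ℝ) ≤ (u:ℝ) := Nat.cast_nonneg u
    set a := Real.log ((k:ℝ) + 3) * Real.sqrt ((k:ℝ) + 1) with ha_def
    set b := Real.log ((k:ℝ) - u + 3) * Real.sqrt ((k:ℝ) - u + 1) with hb_def
    have ha : 0 < a := mul_pos (Real.log_pos (by linarith))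
      (Real.sqrt_pos.mpr (by linarith))
    have hb : 0 < b := mul_pos (Real.log_pos (by linarith))
      (Real.sqrt_pos.mpr (by linarith))
    have hprod : Real.log ((k:ℝ) + 3) * Real.log ((k : ℝ) - u + 3) *
        Real.sqrt ((k:ℝ) + 1) * Real.sqrt ((k : ℝ) - u + 1) = a * b := by
      rw [ha_def, hb_def]; ring
    have ha2 : a ^ 2 = ((k:ℝ) + 1) * Real.log (((k:ℝ) + 1) + 2) ^ 2 := by
      rw [ha_def, mul_pow, Real.sq_sqrt (by linarith)]
      ring_nf
    have hb2 : b ^ 2 = ((k:ℝ) - u + 1) * Real.log (((k:ℝ) - u + 1) + 2) ^ 2 := by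
      rw [hb_def, mul_pow, Real.sq_sqrt (by linarith)]
      ring_nf
    have h1 := keyB ((k:ℝ) + 1) (by linarith)
    have h2 := keyB ((k:ℝ) - u + 1) (by linarith)
    rw [hprod]
    calc 1/(a*b) ≤ (1/a^2 + 1/b^2)/2 := amgm a b ha hb
      _ ≤ ((f₁ k - f₁ (k+1)) + (f₂ k - f₂ (k+1))) / 2 := by
          rw [ha2, hb2]
          have e1 : f₁ k - f₁ (k+1)
              = 2 / Real.log (((k:ℝ) + 1) + 1) - 2 / Real.log (((k:ℝ) + 1) + 2) := by
            simp only [hf₁]; push_cast; ring_nf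
          have e2 : f₂ k - f₂ (k+1)
              = 2 / Real.log (((k:ℝ) - u + 1) + 1) - 2 / Real.log (((k:ℝ) - u + 1) + 2) := by
            simp only [hf₂]; push_cast; ring_nf
          rw [e1, e2]
          have := add_le_add h1 h2
          linarith
  have hsum := Finset.sum_le_sum hstep
  refine hsum.trans ?_
  have hsplit : ∑ k ∈ Finset.Ico (u+1) t, ((f₁ k - f₁ (k+1)) + (f₂ k - f₂ (k+1))) / 2
      = ((∑ k ∈ Finset.Ico (u+1) t, (f₁ k - f₁ (k+1)))
        + (∑ k ∈ Finset.Ico (u+1) t, (f₂ k - f₂ (k+1)))) / 2 := by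
    rw [← Finset.sum_add_distrib, ← Finset.sum_div]
  rw [hsplit]
  have ht1 : ∑ k ∈ Finset.Ico (u+1) t, (f₁ k - f₁ (k+1)) ≤ f₁ (u+1) := by
    apply telesum
    · apply div_nonneg (by norm_num)
      exact Real.log_nonneg (by push_cast; linarith [(Nat.cast_nonneg u : (0:ℝ) ≤ u)])
    · apply div_nonneg (by norm_num)
      exact Real.log_nonneg (by push_cast; linarith [(Nat.cast_nonneg t : (0:ℝ) ≤ t)])
  have ht2 : ∑ k ∈ Finset.Ico (u+1) t, (f₂ k - f₂ (k+1)) ≤ f₂ (u+1) := by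
    apply telesum
    · apply div_nonneg (by norm_num)
      apply Real.log_nonneg
      push_cast; linarith
    · apply div_nonneg (by norm_num)
      apply Real.log_nonneg
      have : (u:ℝ) + 1 ≤ (t:ℝ) := by exact_mod_cast hut
      push_cast; linarith
  have hv1 : f₁ (u+1) ≤ 2 / Real.log 3 := by
    simp only [hf₁]
    apply div_le_div_of_nonneg_left (by norm_num) hL3
    apply Real.log_le_log (by norm_num)
    push_cast; linarith [(Nat.cast_nonneg u : (0:ℝ) ≤ u)]
  have hv2 : f₂ (u+1) = 2 / Real.log 3 := by
    simp only [hf₂]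
    norm_num
  linarith
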